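/- Let n ≥ 6. Every graph in the family 𝒢₁(B₂) is non-bipartite, B₂-free, and has exactly ⌊(n−1)²/4⌋ + 2 edges. -/

import Mathlib

open SimpleGraph Set

/-- `G` contains no book `B_{r+1}`, i.e. no two adjacent vertices of `G` have at least
`r + 1` common neighbours.  `B₂`-freeness is `BookFree 1`. -/
def BookFree {V : Type*} (r : ℕ) (G : SimpleGraph V) : Prop :=
  ∀ u v : V, G.Adj u v → ({w : V | G.Adj u w ∧ G.Adj v w}).ncard ≤ r

/-- The member of the family `𝒢₁(B₂)` determined by `S₁ ⊆ S* = Fin a` and `T₁ ⊆ T* = Fin b`: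
it is obtained from the complete bipartite graph with parts `S*`, `T*` and a disjoint triangle
`w₁w₂w₃` (the three elements `0, 1, 2` of `Fin 3`) by joining `w₃` to all vertices of
`S₁ ∪ T₁`, `w₁` to all vertices of `S* \ S₁`, and `w₂` to all vertices of `T* \ T₁`. -/
def G1B2 (a b : ℕ) (S1 : Finset (Fin a)) (T1 : Finset (Fin b)) :
    SimpleGraph (Fin a ⊕ Fin b ⊕ Fin 3) :=
  SimpleGraph.fromRel (fun x y =>
    (∃ (i : Fin a) (j : Fin b), x = Sum.inl i ∧ y = Sum.inr (Sum.inl j)) ∨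
    (∃ k l : Fin 3, k ≠ l ∧ x = Sum.inr (Sum.inr k) ∧ y = Sum.inr (Sum.inr l)) ∨
    (∃ i ∈ S1, x = Sum.inr (Sum.inr 2) ∧ y = Sum.inl i) ∨
    (∃ j ∈ T1, x = Sum.inr (Sum.inr 2) ∧ y = Sum.inr (Sum.inl j)) ∨
    (∃ i : Fin a, i ∉ S1 ∧ x = Sum.inr (Sum.inr 0) ∧ y = Sum.inl i) ∨
    (∃ j : Fin b, j ∉ T1 ∧ x = Sum.inr (Sum.inr 1) ∧ y = Sum.inr (Sum.inl j)))

section Aux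

open Finset

variable {a b : ℕ} {S1 : Finset (Fin a)} {T1 : Finset (Fin b)}

@[simp] lemma adj_ll {i i' : Fin a} : ¬ (G1B2 a b S1 T1).Adj (.inl i) (.inl i') := by
  simp [G1B2]
@[simp] lemma adj_lr {i : Fin a} {j : Fin b} : (G1B2 a b S1 T1).Adj (.inl i) (.inr (.inl j)) := by
  simp [G1B2]
@[simp] lemma adj_rl {i : Fin a} {j : Fin b} : (G1B2 a b S1 T1).Adj (.inr (.inl j)) (.inl i) := by
  simp [G1B2]
@[simp] lemma adj_lw {i : Fin a} {k : Fin 3} :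
    (G1B2 a b S1 T1).Adj (.inl i) (.inr (.inr k)) ↔ (k = 2 ∧ i ∈ S1) ∨ (k = 0 ∧ i ∉ S1) := by
  simp [G1B2]; aesop
@[simp] lemma adj_wl {i : Fin a} {k : Fin 3} :
    (G1B2 a b S1 T1).Adj (.inr (.inr k)) (.inl i) ↔ (k = 2 ∧ i ∈ S1) ∨ (k = 0 ∧ i ∉ S1) := by
  rw [SimpleGraph.adj_comm]; exact adj_lw
@[simp] lemma adj_rr {j j' : Fin b} : ¬ (G1B2 a b S1 T1).Adj (.inr (.inl j)) (.inr (.inl j')) := by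
  simp [G1B2]
@[simp] lemma adj_rw {j : Fin b} {k : Fin 3} :
    (G1B2 a b S1 T1).Adj (.inr (.inl j)) (.inr (.inr k)) ↔ (k = 2 ∧ j ∈ T1) ∨ (k = 1 ∧ j ∉ T1) := by
  simp [G1B2]; aesop
@[simp] lemma adj_wr {j : Fin b} {k : Fin 3} :
    (G1B2 a b S1 T1).Adj (.inr (.inr k)) (.inr (.inl j)) ↔ (k = 2 ∧ j ∈ T1) ∨ (k = 1 ∧ j ∉ T1) := by
  rw [SimpleGraph.adj_comm]; exact adj_rw
@[simp] lemma adj_ww {k l : Fin 3} :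
    (G1B2 a b S1 T1).Adj (.inr (.inr k)) (.inr (.inr l)) ↔ k ≠ l := by
  simp [G1B2]; aesop

open Classical in
lemma edge_count : (G1B2 a b S1 T1).edgeFinset.card = a*b + a + b + 3 := by
  classical
  set G := G1B2 a b S1 T1 with hG
  have hdeg : ∀ v, G.degree v = ∑ w, if G.Adj v w then 1 else 0 := fun v => by
    rw [← card_neighborFinset_eq_degree, neighborFinset_eq_filter, Finset.card_filter]
  have key : ∑ v, G.degree v = 2 * (a*b + a + b + 3) := by
    simp only [hdeg]
    rw [Fintype.sum_sum_type]
    have h1 : ∀ i : Fin a, (∑ w, if G.Adj (.inl i) w then 1 else 0) = b + 1 := by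
      intro i
      rw [Fintype.sum_sum_type, Fintype.sum_sum_type]
      by_cases h : i ∈ S1 <;> simp [hG, Fin.sum_univ_three, h]
    have h2 : ∀ j : Fin b, (∑ w, if G.Adj (.inr (.inl j)) w then 1 else 0) = a + 1 := by
      intro j
      rw [Fintype.sum_sum_type, Fintype.sum_sum_type]
      by_cases h : j ∈ T1 <;> simp [hG, Fin.sum_univ_three, h]
    have h3 : (∑ x : Fin b ⊕ Fin 3, ∑ w, if G.Adj (.inr x) w then 1 else 0) = b*(a+1) + (a + b + 6) := by
      rw [Fintype.sum_sum_type]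
      congr 1
      · simp [h2]
      · have : ∀ k : Fin 3, (∑ w, if G.Adj (.inr (.inr k)) w then 1 else 0)
            = (∑ i : Fin a, if G.Adj (.inl i) (.inr (.inr k)) then 1 else 0)
            + ((∑ j : Fin b, if G.Adj (.inr (.inl j)) (.inr (.inr k)) then 1 else 0)
            + (∑ l : Fin 3, if (k : Fin 3) ≠ l then 1 else 0)) := by
          intro k
          rw [Fintype.sum_sum_type, Fintype.sum_sum_type]
          congr 1
          · exact Finset.sum_congr rfl fun i _ => by rw [G.adj_comm]
          congr 1
          · exact Finset.sum_congr rfl fun j _ => by rw [G.adj_comm]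
          · simp [hG]
        simp only [this]
        rw [Finset.sum_add_distrib, Finset.sum_add_distrib]
        rw [Finset.sum_comm, Finset.sum_comm (s := (univ : Finset (Fin 3)))]
        have ha : (∑ i : Fin a, ∑ k : Fin 3, if G.Adj (.inl i) (.inr (.inr k)) then 1 else 0) = a := by
          have : ∀ i : Fin a, (∑ k : Fin 3, if G.Adj (.inl i) (.inr (.inr k)) then 1 else 0) = 1 := by
            intro i; by_cases h : i ∈ S1 <;> simp [hG, Fin.sum_univ_three, h]
          simp [this]
        have hb : (∑ j : Fin b, ∑ k : Fin 3, if G.Adj (.inr (.inl j)) (.inr (.inr k)) then 1 else 0) = b := by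
          have : ∀ j : Fin b, (∑ k : Fin 3, if G.Adj (.inr (.inl j)) (.inr (.inr k)) then 1 else 0) = 1 := by
            intro j; by_cases h : j ∈ T1 <;> simp [hG, Fin.sum_univ_three, h]
          simp [this]
        have hc : (∑ k : Fin 3, ∑ l : Fin 3, if (k:Fin 3) ≠ l then 1 else 0) = 6 := by decide
        rw [ha, hb, hc]; omega
    rw [h3]
    simp [h1]
    ring
  have := G.sum_degrees_eq_twice_card_edges
  omega

set_option maxHeartbeats 2000000 in
lemma bookfree (h : S1.card * T1.card ≤ 1) : BookFree 1 (G1B2 a b S1 T1) := by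
  intro u v huv
  rw [Set.ncard_le_one_iff]
  rintro x y ⟨hux, hvx⟩ ⟨huy, hvy⟩
  have hS : ∀ i ∈ S1, ∀ i' ∈ S1, ∀ j, j ∈ T1 → i = i' := by
    intro i hi i' hi' j hj
    have : S1.card ≤ 1 := by
      have : 1 ≤ T1.card := Finset.card_pos.mpr ⟨j, hj⟩
      nlinarith
    exact Finset.card_le_one.mp this i hi i' hi'
  have hT : ∀ j ∈ T1, ∀ j' ∈ T1, ∀ i, i ∈ S1 → j = j' := by
    intro j hj j' hj' i hi
    have : T1.card ≤ 1 := by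
      have : 1 ≤ S1.card := Finset.card_pos.mpr ⟨i, hi⟩
      nlinarith
    exact Finset.card_le_one.mp this j hj j' hj'
  rcases u with i | j | k <;> rcases v with i' | j' | k' <;>
    rcases x with x1 | x2 | x3 <;> rcases y with y1 | y2 | y3 <;> simp_all
  all_goals try casesm* _ ∨ _, _ ∧ _
  all_goals subst_vars
  all_goals first
    | rfl
    | (apply hS <;> assumption)
    | (apply hT <;> assumption)
    | (simp_all)
    | (fin_cases k <;> fin_cases k' <;> fin_cases x3 <;> fin_cases y3 <;> simp_all)

lemma noncol : ¬ (G1B2 a b S1 T1).Colorable 2 := by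
  rintro ⟨C⟩
  have h01 : C (.inr (.inr 0)) ≠ C (.inr (.inr 1)) := C.valid (adj_ww.mpr (by decide))
  have h02 : C (.inr (.inr 0)) ≠ C (.inr (.inr 2)) := C.valid (adj_ww.mpr (by decide))
  have h12 : C (.inr (.inr 1)) ≠ C (.inr (.inr 2)) := C.valid (adj_ww.mpr (by decide))
  revert h01 h02 h12
  generalize C (.inr (.inr 0)) = x
  generalize C (.inr (.inr 1)) = y
  generalize C (.inr (.inr 2)) = z
  revert x y z
  decide

lemma arith (n : ℕ) (hn : 6 ≤ n) :
    (n-3)/2 * ((n-2)/2) + (n-3)/2 + (n-2)/2 + 3 = (n-1)^2/4 + 2 := by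
  obtain ⟨m, rfl | rfl⟩ : ∃ m, n = 2*m ∨ n = 2*m+1 := ⟨n/2, by omega⟩
  · obtain ⟨k, rfl⟩ : ∃ k, m = k+3 := ⟨m-3, by omega⟩
    have h1 : (2*(k+3)-3)/2 = k+1 := by omega
    have h2 : (2*(k+3)-2)/2 = k+2 := by omega
    have h3 : 2*(k+3)-1 = 2*k+5 := by omega
    rw [h1, h2, h3]
    have h4 : (2*k+5)^2 = 4*(k*k)+20*k+25 := by ring
    have h5 : (k+1)*(k+2) = k*k+3*k+2 := by ring
    rw [h4, h5]
    generalize k*k = q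
    omega
  · obtain ⟨k, rfl⟩ : ∃ k, m = k+3 := ⟨m-3, by omega⟩
    have h1 : (2*(k+3)+1-3)/2 = k+2 := by omega
    have h2 : (2*(k+3)+1-2)/2 = k+2 := by omega
    have h3 : 2*(k+3)+1-1 = 2*k+6 := by omega
    rw [h1, h2, h3]
    have h4 : (2*k+6)^2 = 4*(k*k)+24*k+36 := by ring
    have h5 : (k+2)*(k+2) = k*k+4*k+4 := by ring
    rw [h4, show (k+2)*(k+2)+(k+2)+(k+2)+3 = k*k+6*k+11 from by rw [h5]; ring]
    generalize k*k = q
    omega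

end Aux

/-- For `n ≥ 6`, every graph in the family `𝒢₁(B₂)` (with parts of sizes `⌊(n-3)/2⌋` and
`⌈(n-3)/2⌉` and `|S₁|·|T₁| ≤ 1`) is non-bipartite, `B₂`-free, and has exactly
`⌊(n-1)²/4⌋ + 2` edges. -/
theorem stmt_5 (n : ℕ) (hn : 6 ≤ n)
    (S1 : Finset (Fin ((n - 3) / 2))) (T1 : Finset (Fin ((n - 2) / 2)))
    (h : S1.card * T1.card ≤ 1) :
    ¬ (G1B2 ((n - 3) / 2) ((n - 2) / 2) S1 T1).Colorable 2 ∧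
    BookFree 1 (G1B2 ((n - 3) / 2) ((n - 2) / 2) S1 T1) ∧
    (G1B2 ((n - 3) / 2) ((n - 2) / 2) S1 T1).edgeSet.ncard = (n - 1) ^ 2 / 4 + 2 := by
  classical
  refine ⟨noncol, bookfree h, ?_⟩
  have h1 : (G1B2 ((n - 3) / 2) ((n - 2) / 2) S1 T1).edgeSet.ncard
      = (G1B2 ((n - 3) / 2) ((n - 2) / 2) S1 T1).edgeFinset.card := by
    rw [Set.ncard_eq_toFinset_card']
    congr 1
  rw [h1, edge_count]
  exact arith n hn
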